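/- Let A be a gauge field on the torus T = (ℤ/Lℤ)³ such that dA(p) = 0 for every plaquette p of T, (τ⁰A)(x) = 0 for every x, and (Q•A)_μ = 0 for μ = 1,2,3. Then A(b) = 0 for every bond b of T. -/

import Mathlib

open Finset

noncomputable section

/-- Points of the discrete torus `(ℤ/Nℤ)³`. -/
abbrev TPt (N : ℕ) : Type := Fin 3 → ZMod N

/-- The standard unit vector `e_μ` in the torus. -/
def unitVec (N : ℕ) (μ : Fin 3) : TPt N := fun i => if i = μ then 1 else 0

/-- The representative of `a ∈ ℤ/Nℤ` in the symmetric range `{-(N-1)/2, …, (N-1)/2}`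
(for odd `N`). -/
def symRep (N : ℕ) (a : ZMod N) : ℤ :=
  if 2 * (a.val : ℤ) + 1 ≤ (N : ℤ) then (a.val : ℤ) else (a.val : ℤ) - (N : ℤ)

/-- Shift a torus point by `k` steps in direction `μ`. -/
def shiftT {N : ℕ} (z : TPt N) (μ : Fin 3) (k : ℤ) : TPt N :=
  fun i => if i = μ then z i + (k : ZMod N) else z i

/-- The sum of the gauge field `A` along the straight lattice path from `z` to `z + t·e_μ`. -/
def segT {N : ℕ} (A : TPt N → TPt N → ℝ) (z : TPt N) (μ : Fin 3) (t : ℤ) : ℝ :=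
  if 0 ≤ t then ∑ j ∈ Finset.range t.toNat, A (shiftT z μ (j : ℤ)) (shiftT z μ ((j : ℤ) + 1))
  else ∑ j ∈ Finset.range (-t).toNat, A (shiftT z μ (-(j : ℤ))) (shiftT z μ (-(j : ℤ) - 1))

/-- The field strength `dA` on the plaquette based at `x` spanned by `e_μ, e_ν`. -/
def plaqT {N : ℕ} (A : TPt N → TPt N → ℝ) (x : TPt N) (μ ν : Fin 3) : ℝ :=
  A x (x + unitVec N μ) + A (x + unitVec N μ) (x + unitVec N μ + unitVec N ν)
    + A (x + unitVec N μ + unitVec N ν) (x + unitVec N ν) + A (x + unitVec N ν) x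

/-- The corner of the rectilinear path `Γ^π_{yx}` reached after the first `m` coordinate
moves. -/
def interPtT {N : ℕ} (y x : TPt N) (π : Equiv.Perm (Fin 3)) (m : ℕ) : TPt N :=
  fun i => if ((π.symm i : Fin 3) : ℕ) < m then x i else y i

/-- `A(Γ^π_{yx})`: the sum of `A` along the rectilinear path (not wrapping around the
torus) from `y` to `x`, moving the coordinates to their final values in the order
`π 0, π 1, π 2`; the coordinate increments are the symmetric representatives of `x - y`. -/
def gammaSumT {N : ℕ} (A : TPt N → TPt N → ℝ) (π : Equiv.Perm (Fin 3)) (y x : TPt N) : ℝ :=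
  ∑ m : Fin 3, segT A (interPtT y x π (m : ℕ)) (π m) (symRep N (x (π m) - y (π m)))

/-- `(τA)(y,x) = (1/6) Σ_π A(Γ^π_{yx})`, averaged over the `3! = 6` permutations. -/
def tauBlk {N : ℕ} (A : TPt N → TPt N → ℝ) (y x : TPt N) : ℝ :=
  (1 / 6) * ∑ π : Equiv.Perm (Fin 3), gammaSumT A π y x

/-- The block of radius `R` centered at `y`: all `x` whose coordinates relative to `y`
have symmetric representative of absolute value at most `R`. -/
def blockF (N : ℕ) [NeZero N] (R : ℤ) (y : TPt N) : Finset (TPt N) :=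
  Finset.univ.filter fun x => ∀ i, |symRep N (x i - y i)| ≤ R

/-- Membership in the coarse lattice `(Lℤ/Nℤ)³ ⊆ (ℤ/Nℤ)³`. -/
def isCoarse (L N : ℕ) (y : TPt N) : Prop :=
  ∀ i, ∃ c : ZMod N, y i = (L : ZMod N) * c

/-- The coarse unit vector `L·e_μ`. -/
def cUnitVec (L N : ℕ) (μ : Fin 3) : TPt N := fun i => if i = μ then (L : ZMod N) else 0

/-- The block-averaged field on coarse bonds:
`(QA)(y, y+Le_μ) = L⁻⁴ Σ_{x ∈ B(y)} A(Γ_{x,x+Le_μ})`. -/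
def Qc (L : ℕ) {N : ℕ} [NeZero N] (A : TPt N → TPt N → ℝ) (y : TPt N) (μ : Fin 3) : ℝ :=
  ((L : ℝ) ^ 4)⁻¹ * ∑ x ∈ blockF N (((L : ℤ) - 1) / 2) y, segT A x μ (L : ℤ)

section Lemmas

variable {N : ℕ} [NeZero N]

lemma symRep_cast (a : ZMod N) : ((symRep N a : ℤ) : ZMod N) = a := by
  unfold symRep
  split <;> push_cast <;> simp [ZMod.natCast_val, ZMod.cast_id]

lemma shiftT_zero (z : TPt N) (μ : Fin 3) : shiftT z μ 0 = z := by
  funext i; simp [shiftT]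

lemma shiftT_succ (z : TPt N) (μ : Fin 3) (t : ℤ) :
    shiftT z μ (t + 1) = shiftT z μ t + unitVec N μ := by
  funext i; by_cases h : i = μ <;> simp [shiftT, unitVec, Pi.add_apply, h] <;> push_cast <;> ring

lemma shiftT_addpt (z v : TPt N) (μ : Fin 3) (t : ℤ) :
    shiftT (z + v) μ t = shiftT z μ t + v := by
  funext i; by_cases h : i = μ <;> simp [shiftT, Pi.add_apply, h] <;> ring

lemma shiftT_shiftT (z : TPt N) (μ : Fin 3) (s t : ℤ) :
    shiftT (shiftT z μ s) μ t = shiftT z μ (s + t) := by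
  funext i; by_cases h : i = μ <;> simp [shiftT, h] <;> push_cast <;> ring

lemma shiftT_one (z : TPt N) (μ : Fin 3) : shiftT z μ 1 = z + unitVec N μ := by
  rw [show (1 : ℤ) = 0 + 1 by ring, shiftT_succ, shiftT_zero]

lemma segT_zero (A : TPt N → TPt N → ℝ) (z : TPt N) (μ : Fin 3) : segT A z μ 0 = 0 := by
  simp [segT]

lemma segT_nonpos (A : TPt N → TPt N → ℝ) (z : TPt N) (μ : Fin 3) (t : ℤ) (ht : t ≤ 0) :
    segT A z μ t
      = ∑ j ∈ Finset.range (-t).toNat, A (shiftT z μ (-(j : ℤ))) (shiftT z μ (-(j : ℤ) - 1)) := by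
  rcases eq_or_lt_of_le ht with h | h
  · subst h; simp [segT]
  · rw [segT, if_neg (by omega)]

lemma segT_succ (A : TPt N → TPt N → ℝ) (hA : ∀ x x', A x x' = - A x' x)
    (z : TPt N) (μ : Fin 3) (t : ℤ) :
    segT A z μ (t + 1) = segT A z μ t + A (shiftT z μ t) (shiftT z μ (t + 1)) := by
  rcases le_or_gt 0 t with h | h
  · rw [segT, if_pos (by omega), segT, if_pos h]
    have h1 : (t + 1).toNat = t.toNat + 1 := by omega
    rw [h1, Finset.sum_range_succ]
    have h2 : ((t.toNat : ℕ) : ℤ) = t := by omega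
    rw [h2]
  · have key : segT A z μ t = segT A z μ (t + 1) + A (shiftT z μ (t + 1)) (shiftT z μ t) := by
      rw [segT_nonpos A z μ t (by omega), segT_nonpos A z μ (t + 1) (by omega)]
      have h1 : (-t).toNat = (-(t + 1)).toNat + 1 := by omega
      rw [h1, Finset.sum_range_succ]
      have h2 : (((-(t + 1)).toNat : ℕ) : ℤ) = -(t + 1) := by omega
      rw [h2]
      norm_num
    rw [key, hA (shiftT z μ (t + 1)) (shiftT z μ t)]
    ring

lemma plaq_key (A : TPt N → TPt N → ℝ) (hA : ∀ x x', A x x' = - A x' x)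
    (hdA : ∀ (x : TPt N) (μ ν : Fin 3), μ ≠ ν → plaqT A x μ ν = 0)
    (x : TPt N) (μ ν : Fin 3) (hμν : μ ≠ ν) :
    A x (x + unitVec N μ) + A (x + unitVec N μ) (x + unitVec N ν + unitVec N μ)
      = A x (x + unitVec N ν) + A (x + unitVec N ν) (x + unitVec N ν + unitVec N μ) := by
  have hp := hdA x μ ν hμν
  rw [plaqT] at hp
  have hc : x + unitVec N μ + unitVec N ν = x + unitVec N ν + unitVec N μ := add_right_comm _ _ _
  rw [hc] at hp
  have h1 := hA (x + unitVec N ν + unitVec N μ) (x + unitVec N ν)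
  have h2 := hA (x + unitVec N ν) x
  linarith

/-- Flat deformation lemma: push an `e_μ` bond past a segment in direction `ν`. -/
lemma segT_deform (A : TPt N → TPt N → ℝ) (hA : ∀ x x', A x x' = - A x' x)
    (hdA : ∀ (x : TPt N) (μ ν : Fin 3), μ ≠ ν → plaqT A x μ ν = 0)
    (z : TPt N) (μ ν : Fin 3) (hμν : μ ≠ ν) (t : ℤ) :
    A z (z + unitVec N μ) + segT A (z + unitVec N μ) ν t
      = segT A z ν t + A (shiftT z ν t) (shiftT z ν t + unitVec N μ) := by
  induction t using Int.induction_on with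
  | zero => simp [segT_zero, shiftT_zero]
  | succ i IH =>
    set x := shiftT z ν (i : ℤ) with hx
    have e1 : shiftT (z + unitVec N μ) ν (i : ℤ) = x + unitVec N μ := shiftT_addpt ..
    have e2 : shiftT z ν ((i : ℤ) + 1) = x + unitVec N ν := shiftT_succ ..
    have e3 : shiftT (z + unitVec N μ) ν ((i : ℤ) + 1) = x + unitVec N ν + unitVec N μ := by
      rw [shiftT_addpt, e2]
    rw [segT_succ A hA, segT_succ A hA, e1, e2, e3]
    have key := plaq_key A hA hdA x μ ν hμν
    linarith
  | pred i IH =>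
    have ht : (-(i : ℤ) - 1) + 1 = -(i : ℤ) := by ring
    set x := shiftT z ν (-(i : ℤ) - 1) with hx
    have e2 : shiftT z ν (-(i : ℤ)) = x + unitVec N ν := by rw [← ht, shiftT_succ]
    have e1 : shiftT (z + unitVec N μ) ν (-(i : ℤ) - 1) = x + unitVec N μ := shiftT_addpt ..
    have e3 : shiftT (z + unitVec N μ) ν (-(i : ℤ)) = x + unitVec N ν + unitVec N μ := by
      rw [shiftT_addpt, e2]
    have s1 : segT A z ν (-(i : ℤ)) = segT A z ν (-(i : ℤ) - 1) + A x (x + unitVec N ν) := by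
      rw [← ht, segT_succ A hA, ht, e2]
    have s2 : segT A (z + unitVec N μ) ν (-(i : ℤ))
        = segT A (z + unitVec N μ) ν (-(i : ℤ) - 1) + A (x + unitVec N μ) (x + unitVec N ν + unitVec N μ) := by
      rw [← ht, segT_succ A hA, ht, e1, e3]
    rw [e2] at IH
    have key := plaq_key A hA hdA x μ ν hμν
    linarith

end Lemmas

section Lemmas2

variable {N : ℕ} [NeZero N]

lemma shiftT_N (z : TPt N) (μ : Fin 3) : shiftT z μ (N : ℤ) = z := by
  funext i; by_cases h : i = μ <;> simp [shiftT, h]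

/-- `segT` along one extra initial step. -/
lemma segT_one_add (A : TPt N → TPt N → ℝ) (hA : ∀ x x', A x x' = - A x' x)
    (z : TPt N) (μ : Fin 3) (n : ℕ) :
    segT A z μ (1 + (n : ℤ)) = A z (z + unitVec N μ) + segT A (z + unitVec N μ) μ (n : ℤ) := by
  induction n with
  | zero =>
    rw [show (1 : ℤ) + ((0 : ℕ) : ℤ) = 0 + 1 by norm_num, segT_succ A hA, segT_zero, shiftT_zero]
    norm_num [segT_zero, shiftT_one]
  | succ i IH =>
    push_cast
    have h1 : (1 : ℤ) + ((i : ℤ) + 1) = (1 + (i : ℤ)) + 1 := by ring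
    rw [h1, segT_succ A hA, segT_succ A hA, IH]
    have e1 : shiftT (z + unitVec N μ) μ (i : ℤ) = shiftT z μ (1 + (i : ℤ)) := by
      rw [← shiftT_one, shiftT_shiftT]
    have e2 : shiftT (z + unitVec N μ) μ ((i : ℤ) + 1) = shiftT z μ (1 + (i : ℤ) + 1) := by
      rw [← shiftT_one, shiftT_shiftT]; ring_nf
    rw [e1, e2]
    ring

/-- Shift-invariance of the loop sum, transverse direction. -/
lemma loop_shift_inv_perp (A : TPt N → TPt N → ℝ) (hA : ∀ x x', A x x' = - A x' x)
    (hdA : ∀ (x : TPt N) (μ ν : Fin 3), μ ≠ ν → plaqT A x μ ν = 0)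
    (z : TPt N) (μ ρ : Fin 3) (hρμ : ρ ≠ μ) :
    segT A (z + unitVec N ρ) μ (N : ℤ) = segT A z μ (N : ℤ) := by
  have h := segT_deform A hA hdA z ρ μ hρμ (N : ℤ)
  rw [shiftT_N] at h
  linarith

/-- Shift-invariance of the loop sum, parallel direction. -/
lemma loop_shift_inv_par (A : TPt N → TPt N → ℝ) (hA : ∀ x x', A x x' = - A x' x)
    (z : TPt N) (μ : Fin 3) :
    segT A (z + unitVec N μ) μ (N : ℤ) = segT A z μ (N : ℤ) := by
  have h1 := segT_one_add A hA z μ N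
  have h2 := segT_succ A hA z μ (N : ℤ)
  rw [shiftT_N] at h2
  have e : shiftT z μ ((N : ℤ) + 1) = z + unitVec N μ := by
    rw [show ((N : ℤ) + 1) = (N : ℤ) + 1 from rfl, ← shiftT_shiftT, shiftT_N, shiftT_one]
  rw [e] at h2
  have h3 : (1 : ℤ) + (N : ℤ) = (N : ℤ) + 1 := by ring
  rw [h3] at h1
  linarith

lemma const_of_shift_inv (f : TPt N → ℝ)
    (h : ∀ (z : TPt N) (ρ : Fin 3), f (z + unitVec N ρ) = f z) (z : TPt N) : f z = f 0 := by
  have hn : ∀ (n : ℕ) (w : TPt N) (ρ : Fin 3), f (w + n • unitVec N ρ) = f w := by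
    intro n
    induction n with
    | zero => intro w ρ; simp
    | succ k IH =>
      intro w ρ
      have : w + (k + 1) • unitVec N ρ = (w + k • unitVec N ρ) + unitVec N ρ := by
        rw [succ_nsmul]; abel
      rw [this, h, IH]
  have hz : z = ((0 : TPt N) + (z 0).val • unitVec N 0 + (z 1).val • unitVec N 1)
      + (z 2).val • unitVec N 2 := by
    funext i
    fin_cases i <;> simp only [Pi.add_apply, Pi.smul_apply, Pi.zero_apply, unitVec] <;>
      norm_num [Fin.ext_iff] <;> rfl
  rw [hz, hn, hn, hn]

end Lemmas2

section Lemmas3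

variable {N : ℕ} [NeZero N]

lemma interPt_one_apply (x : TPt N) (m : ℕ) (i : Fin 3) :
    interPtT 0 x 1 m i = if (i : ℕ) < m then x i else 0 := by
  simp [interPtT, Equiv.Perm.one_symm]; rfl

lemma interPt_add_le (x : TPt N) (μ : Fin 3) (m : ℕ) (h : m ≤ (μ : ℕ)) :
    interPtT 0 (x + unitVec N μ) 1 m = interPtT 0 x 1 m := by
  funext i
  rw [interPt_one_apply, interPt_one_apply]
  by_cases hi : (i : ℕ) < m
  · rw [if_pos hi, if_pos hi]
    have hne : i ≠ μ := by
      intro he; subst he; omega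
    simp [Pi.add_apply, unitVec, hne]
  · rw [if_neg hi, if_neg hi]

lemma interPt_add_gt (x : TPt N) (μ : Fin 3) (m : ℕ) (h : (μ : ℕ) < m) :
    interPtT 0 (x + unitVec N μ) 1 m = interPtT 0 x 1 m + unitVec N μ := by
  funext i
  rw [Pi.add_apply, interPt_one_apply, interPt_one_apply]
  by_cases hi : i = μ
  · subst hi
    rw [if_pos h, if_pos h]
    simp [Pi.add_apply, unitVec]
  · have : unitVec N μ i = 0 := by simp [unitVec, hi]
    rw [this, add_zero]
    by_cases him : (i : ℕ) < m
    · rw [if_pos him, if_pos him]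
      simp [Pi.add_apply, unitVec, hi]
    · rw [if_neg him, if_neg him]

lemma shift_interPt0 (x : TPt N) :
    shiftT (interPtT 0 x 1 0) 0 (symRep N (x 0)) = interPtT 0 x 1 1 := by
  funext i
  fin_cases i <;> simp [shiftT, interPtT, symRep_cast, Fin.ext_iff, Equiv.Perm.one_symm]

lemma shift_interPt1 (x : TPt N) :
    shiftT (interPtT 0 x 1 1) 1 (symRep N (x 1)) = interPtT 0 x 1 2 := by
  funext i
  fin_cases i <;> simp [shiftT, interPtT, symRep_cast, Fin.ext_iff, Equiv.Perm.one_symm]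

lemma shift_interPt2 (x : TPt N) :
    shiftT (interPtT 0 x 1 2) 2 (symRep N (x 2)) = x := by
  funext i
  fin_cases i <;> simp [shiftT, interPtT, symRep_cast, Fin.ext_iff, Equiv.Perm.one_symm]

lemma gammaSum_expand (A : TPt N → TPt N → ℝ) (y : TPt N) :
    gammaSumT A 1 0 y
      = segT A (interPtT 0 y 1 0) 0 (symRep N (y 0))
        + segT A (interPtT 0 y 1 1) 1 (symRep N (y 1))
        + segT A (interPtT 0 y 1 2) 2 (symRep N (y 2)) := by
  simp [gammaSumT, Fin.sum_univ_three]

lemma comp_add_unit (x : TPt N) (μ i : Fin 3) (h : i ≠ μ) : (x + unitVec N μ) i = x i := by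
  simp [Pi.add_apply, unitVec, h]

lemma comp_add_unit_self (x : TPt N) (μ : Fin 3) : (x + unitVec N μ) μ = x μ + 1 := by
  simp [Pi.add_apply, unitVec]

lemma tau_step (A : TPt N → TPt N → ℝ) (hA : ∀ x x', A x x' = - A x' x)
    (hdA : ∀ (x : TPt N) (μ ν : Fin 3), μ ≠ ν → plaqT A x μ ν = 0) (x : TPt N) (μ : Fin 3)
    (hw : symRep N (x μ + 1) = symRep N (x μ) + 1) :
    gammaSumT A 1 0 (x + unitVec N μ) = gammaSumT A 1 0 x + A x (x + unitVec N μ) := by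
  have hlt := μ.isLt
  have hμ : μ = 0 ∨ μ = 1 ∨ μ = 2 := by
    rcases (by omega : (μ : ℕ) = 0 ∨ (μ : ℕ) = 1 ∨ (μ : ℕ) = 2) with h | h | h
    · exact Or.inl (Fin.ext h)
    · exact Or.inr (Or.inl (Fin.ext h))
    · exact Or.inr (Or.inr (Fin.ext h))
  rcases hμ with hμ | hμ | hμ <;> subst hμ
  · -- μ = 0
    rw [gammaSum_expand, gammaSum_expand]
    rw [interPt_add_le x 0 0 (by norm_num), interPt_add_gt x 0 1 (by norm_num),
      interPt_add_gt x 0 2 (by norm_num),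
      comp_add_unit x 0 1 (by norm_num [Fin.ext_iff]), comp_add_unit x 0 2 (by norm_num [Fin.ext_iff]),
      comp_add_unit_self x 0, hw]
    have t0 : segT A (interPtT 0 x 1 0) 0 (symRep N (x 0) + 1)
        = segT A (interPtT 0 x 1 0) 0 (symRep N (x 0))
          + A (interPtT 0 x 1 1) (interPtT 0 x 1 1 + unitVec N 0) := by
      rw [segT_succ A hA, shiftT_succ, shift_interPt0]
    have t1 := segT_deform A hA hdA (interPtT 0 x 1 1) 0 1
      (by norm_num [Fin.ext_iff]) (symRep N (x 1))
    rw [shift_interPt1] at t1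
    have t2 := segT_deform A hA hdA (interPtT 0 x 1 2) 0 2
      (by norm_num [Fin.ext_iff]) (symRep N (x 2))
    rw [shift_interPt2] at t2
    linarith
  · -- μ = 1
    rw [gammaSum_expand, gammaSum_expand]
    rw [interPt_add_le x 1 0 (by norm_num), interPt_add_le x 1 1 (by norm_num),
      interPt_add_gt x 1 2 (by norm_num),
      comp_add_unit x 1 0 (by norm_num [Fin.ext_iff]), comp_add_unit x 1 2 (by norm_num [Fin.ext_iff]),
      comp_add_unit_self x 1, hw]
    have t1 : segT A (interPtT 0 x 1 1) 1 (symRep N (x 1) + 1)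
        = segT A (interPtT 0 x 1 1) 1 (symRep N (x 1))
          + A (interPtT 0 x 1 2) (interPtT 0 x 1 2 + unitVec N 1) := by
      rw [segT_succ A hA, shiftT_succ, shift_interPt1]
    have t2 := segT_deform A hA hdA (interPtT 0 x 1 2) 1 2
      (by norm_num [Fin.ext_iff]) (symRep N (x 2))
    rw [shift_interPt2] at t2
    linarith
  · -- μ = 2
    rw [gammaSum_expand, gammaSum_expand]
    rw [interPt_add_le x 2 0 (by norm_num), interPt_add_le x 2 1 (by norm_num),
      interPt_add_le x 2 2 (by norm_num),
      comp_add_unit x 2 0 (by norm_num [Fin.ext_iff]), comp_add_unit x 2 1 (by norm_num [Fin.ext_iff]),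
      comp_add_unit_self x 2, hw]
    have t2 : segT A (interPtT 0 x 1 2) 2 (symRep N (x 2) + 1)
        = segT A (interPtT 0 x 1 2) 2 (symRep N (x 2)) + A x (x + unitVec N 2) := by
      rw [segT_succ A hA, shiftT_succ, shift_interPt2]
    linarith

end Lemmas3

lemma symRep_succ {L : ℕ} [NeZero L] (hL3 : 3 ≤ L) (hLodd : Odd L) (a : ZMod L)
    (ha : a.val ≠ (L - 1) / 2) : symRep L (a + 1) = symRep L a + 1 := by
  obtain ⟨m, hm⟩ := hLodd
  have hv : a.val < L := ZMod.val_lt a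
  have hcast : a = ((a.val : ℕ) : ZMod L) := by rw [ZMod.natCast_val, ZMod.cast_id]
  by_cases hlast : a.val = L - 1
  · have h1 : a + 1 = 0 := by
      rw [hcast, hlast]
      have h2 : ((L - 1 : ℕ) : ZMod L) + 1 = ((L : ℕ) : ZMod L) := by
        push_cast [Nat.cast_sub (show 1 ≤ L by omega)]; ring
      rw [h2, ZMod.natCast_self]
    have hval : (a + 1).val = 0 := by rw [h1]; simp
    unfold symRep
    rw [hval, hlast]
    rw [if_pos (by omega), if_neg (by push_cast [Nat.cast_sub (show 1 ≤ L by omega)]; omega)]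
    push_cast [Nat.cast_sub (show 1 ≤ L by omega)]
    omega
  · have hval : (a + 1).val = a.val + 1 := by
      conv_lhs => rw [hcast]
      rw [show ((a.val : ℕ) : ZMod L) + 1 = ((a.val + 1 : ℕ) : ZMod L) by push_cast; ring]
      rw [ZMod.val_natCast, Nat.mod_eq_of_lt (by omega)]
    unfold symRep
    rw [hval]
    split <;> split <;> push_cast <;> omega

theorem torus_axial_gauge_rigidity' (L : ℕ) (hL3 : 3 ≤ L) (hLodd : Odd L) [NeZero L]
    (A : TPt L → TPt L → ℝ) (hA : ∀ x x', A x x' = - A x' x)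
    (hdA : ∀ (x : TPt L) (μ ν : Fin 3), μ ≠ ν → plaqT A x μ ν = 0)
    (htau : ∀ x : TPt L, gammaSumT A 1 0 x = 0)
    (hQ : ∀ μ : Fin 3, ((L : ℝ) ^ 3)⁻¹ * ∑ x : TPt L, segT A x μ (L : ℤ) = 0) :
    ∀ (x : TPt L) (μ : Fin 3), A x (x + unitVec L μ) = 0 := by
  have hbond : ∀ (y : TPt L) (ν : Fin 3), (y ν).val ≠ (L - 1) / 2 →
      A y (y + unitVec L ν) = 0 := by
    intro y ν hy
    have hstep := tau_step A hA hdA y ν (symRep_succ hL3 hLodd (y ν) hy)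
    rw [htau, htau] at hstep
    linarith
  intro x μ
  by_cases hval : (x μ).val ≠ (L - 1) / 2
  · exact hbond x μ hval
  push_neg at hval
  -- loop sums vanish
  have hshift : ∀ (w : TPt L) (ρ : Fin 3),
      segT A (w + unitVec L ρ) μ (L : ℤ) = segT A w μ (L : ℤ) := by
    intro w ρ
    by_cases hρ : ρ = μ
    · subst hρ; exact loop_shift_inv_par A hA w ρ
    · exact loop_shift_inv_perp A hA hdA w μ ρ hρ
  have hconst : ∀ w : TPt L, segT A w μ (L : ℤ) = segT A (0 : TPt L) μ (L : ℤ) :=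
    const_of_shift_inv (fun w => segT A w μ (L : ℤ)) hshift
  have hL0 : ((L : ℝ)) ≠ 0 := Nat.cast_ne_zero.mpr (by omega)
  have h0 : segT A (0 : TPt L) μ (L : ℤ) = 0 := by
    have hq := hQ μ
    have hsum : ∑ w : TPt L, segT A w μ (L : ℤ)
        = (Fintype.card (TPt L) : ℝ) * segT A (0 : TPt L) μ (L : ℤ) := by
      rw [Finset.sum_congr rfl (fun w _ => hconst w), Finset.sum_const, Finset.card_univ,
        nsmul_eq_mul]
    have hcard : (Fintype.card (TPt L)) = L ^ 3 := by
      simp [ZMod.card]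
    rw [hsum, hcard] at hq
    have h3 : ((L : ℝ))^3 ≠ 0 := pow_ne_zero _ hL0
    push_cast at hq
    field_simp at hq
    exact hq
  have hfz : ∀ w : TPt L, segT A w μ (L : ℤ) = 0 := fun w => (hconst w).trans h0
  -- expand the loop based at x + e_μ
  set z := x + unitVec L μ with hzdef
  have hz : segT A z μ (L : ℤ) = 0 := hfz z
  rw [segT, if_pos (by positivity)] at hz
  rw [Int.toNat_natCast] at hz
  have hsplit : ∑ j ∈ Finset.range L, A (shiftT z μ (j : ℤ)) (shiftT z μ ((j : ℤ) + 1))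
      = (∑ j ∈ Finset.range (L - 1), A (shiftT z μ (j : ℤ)) (shiftT z μ ((j : ℤ) + 1)))
        + A (shiftT z μ ((L - 1 : ℕ) : ℤ)) (shiftT z μ (((L - 1 : ℕ) : ℤ) + 1)) := by
    have iden : ∀ (n : ℕ) (g : ℕ → ℝ), 1 ≤ n →
        ∑ j ∈ Finset.range n, g j = (∑ j ∈ Finset.range (n - 1), g j) + g (n - 1) := by
      intro n g hn
      match n, hn with
      | (m + 1), _ => simp [Finset.sum_range_succ]
    exact iden L _ (by omega)
  have hzero : ∀ j ∈ Finset.range (L - 1),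
      A (shiftT z μ (j : ℤ)) (shiftT z μ ((j : ℤ) + 1)) = 0 := by
    intro j hj
    rw [Finset.mem_range] at hj
    rw [shiftT_succ]
    apply hbond
    have hcomp : (shiftT z μ (j : ℤ)) μ = (((L - 1) / 2 + 1 + j : ℕ) : ZMod L) := by
      have h1 : (shiftT z μ (j : ℤ)) μ = x μ + 1 + ((j : ℕ) : ZMod L) := by
        simp [shiftT, hzdef, Pi.add_apply, unitVec]
      rw [h1]
      have h2 : x μ = (((L - 1) / 2 : ℕ) : ZMod L) := by
        rw [← hval, ZMod.natCast_val, ZMod.cast_id]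
      rw [h2]
      push_cast
      ring
    rw [hcomp, ZMod.val_natCast]
    obtain ⟨m, hm⟩ := hLodd
    set k := (L - 1) / 2 with hkdef
    have hk : L = 2 * k + 1 := by omega
    rcases lt_or_ge j k with hjk | hjk
    · rw [Nat.mod_eq_of_lt (by omega)]
      omega
    · have he : k + 1 + j = L + (j - k) := by omega
      rw [he, Nat.add_mod_left, Nat.mod_eq_of_lt (by omega)]
      omega
  have hwrap : shiftT z μ ((L - 1 : ℕ) : ℤ) = x := by
    funext i
    by_cases hi : i = μ
    · subst hi
      have hL1 : ((L - 1 : ℕ) : ZMod L) = -1 := by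
        have : ((L : ℕ) : ZMod L) = 0 := ZMod.natCast_self L
        push_cast [Nat.cast_sub (show 1 ≤ L by omega)]
        rw [this]; ring
      simp only [shiftT, if_pos rfl, hzdef, Pi.add_apply, unitVec, if_pos rfl]
      push_cast
      rw [hL1]
      ring
    · simp [shiftT, hi, hzdef, Pi.add_apply, unitVec]
  have hlast : A (shiftT z μ ((L - 1 : ℕ) : ℤ)) (shiftT z μ (((L - 1 : ℕ) : ℤ) + 1))
      = A x (x + unitVec L μ) := by
    rw [shiftT_succ, hwrap]
  rw [hsplit, Finset.sum_eq_zero hzero, hlast] at hz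
  linarith

/-- If a gauge field `A` on the torus `T = (ℤ/Lℤ)³` has vanishing field
strength on every plaquette, `(τ⁰A)(x) = 0` for every `x`, and the toron averages
`(Q•A)_μ = L⁻³ Σ_x A(Γ_{x,μ})` vanish for `μ = 1,2,3`, then `A` vanishes on every bond. -/
theorem torus_axial_gauge_rigidity (L : ℕ) (hL3 : 3 ≤ L) (hLodd : Odd L) [NeZero L]
    (A : TPt L → TPt L → ℝ) (hA : ∀ x x', A x x' = - A x' x)
    (hdA : ∀ (x : TPt L) (μ ν : Fin 3), μ ≠ ν → plaqT A x μ ν = 0)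
    (htau : ∀ x : TPt L, gammaSumT A 1 0 x = 0)
    (hQ : ∀ μ : Fin 3, ((L : ℝ) ^ 3)⁻¹ * ∑ x : TPt L, segT A x μ (L : ℤ) = 0) :
    ∀ (x : TPt L) (μ : Fin 3), A x (x + unitVec L μ) = 0 := by
  exact torus_axial_gauge_rigidity' L hL3 hLodd A hA hdA htau hQ
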